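/- There exists an absolute constant C>0 such that for every ψ∈𝔐_∞^+, every β∈ℝ, and every n∈ℕ, the function Ψ_{n,β}(t)=∑_{k=n}^{∞}ψ(2n+k)cos(kt+βπ/2) satisfies ∫_0^{2π}|Ψ_{n,β}(t)|dt ≤ C·ψ(3n)·(1 + ln⁺(η(ψ;n)−n)), where ln⁺x = max{0, ln x}. -/

import Mathlib

set_option maxHeartbeats 1000000


open Real MeasureTheory Filter
open Finset

noncomputable section

/-- `ω` is a modulus of continuity: continuous, nondecreasing, subadditive on `[0,∞)`,
nonnegative, and `ω 0 = 0`. -/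
def IsModulus (ω : ℝ → ℝ) : Prop :=
  ContinuousOn ω (Set.Ici 0) ∧ MonotoneOn ω (Set.Ici 0) ∧
  (∀ s t : ℝ, 0 ≤ s → 0 ≤ t → ω (s + t) ≤ ω s + ω t) ∧ ω 0 = 0 ∧
  ∀ t : ℝ, 0 ≤ t → 0 ≤ ω t

/-- `ψ` belongs to `𝔐_∞^+`, where `η t = ψ⁻¹(ψ t / 2)` (i.e. `η t ≥ t` and
`ψ (η t) = ψ t / 2`) and `μ t = t / (η t − t)` is nondecreasing and tends to `∞`. -/
def IsMInfPlus (ψ η : ℝ → ℝ) : Prop :=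
  (∀ t ≥ (1:ℝ), 0 < ψ t) ∧ ContinuousOn ψ (Set.Ici 1) ∧
  ConvexOn ℝ (Set.Ici 1) ψ ∧ Tendsto ψ atTop (nhds 0) ∧
  (∀ t ≥ (1:ℝ), t < η t ∧ ψ (η t) = ψ t / 2) ∧
  MonotoneOn (fun t => t / (η t - t)) (Set.Ici 1) ∧
  Tendsto (fun t => t / (η t - t)) atTop atTop


lemma psi_anti {ψ : ℝ → ℝ} (hpos : ∀ t ≥ (1:ℝ), 0 < ψ t)
    (hconv : ConvexOn ℝ (Set.Ici 1) ψ) (h0 : Tendsto ψ atTop (nhds 0)) :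
    AntitoneOn ψ (Set.Ici 1) := by
  intro s hs t ht hst
  rcases eq_or_lt_of_le hst with rfl | hlt
  · exact le_rfl
  by_contra hcon
  push_neg at hcon
  -- ψ s < ψ t, slope c > 0
  have hc : 0 < (ψ t - ψ s) / (t - s) := by
    apply div_pos (by linarith) (by linarith)
  -- find u > t with ψ u < ψ s
  have hev : ∀ᶠ u in atTop, ψ u < ψ s := by
    have := h0.eventually_lt_const (hpos s hs)
    simpa using this
  obtain ⟨u, hu1, hu2⟩ := ((hev.and (eventually_ge_atTop (t+1)))).exists
  have hslope := hconv.slope_mono_adjacent hs (show u ∈ Set.Ici 1 by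
      simp only [Set.mem_Ici] at ht ⊢; linarith) hlt (show t < u by linarith)
  have h2 : (ψ u - ψ t) / (u - t) < 0 := by
    apply div_neg_of_neg_of_pos (by linarith) (by linarith)
  linarith

lemma psi_summable {ψ η : ℝ → ℝ} (hpos : ∀ t ≥ (1:ℝ), 0 < ψ t)
    (hanti : AntitoneOn ψ (Set.Ici 1))
    (hη : ∀ t ≥ (1:ℝ), t < η t ∧ ψ (η t) = ψ t / 2)
    (hmu : Tendsto (fun t => t / (η t - t)) atTop atTop)
    {x : ℝ} (hx : 1 ≤ x) :
    Summable (fun k : ℕ => ψ (x + k)) := by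
  obtain ⟨T, hT⟩ := (hmu.eventually_ge_atTop 3).exists_forall_of_atTop
  set T' := max T 1 with hT'def
  have hT'1 : (1:ℝ) ≤ T' := le_max_right _ _
  have hpow : ∀ m : ℕ, (1:ℝ) ≤ (4/3)^m := fun m => one_le_pow₀ (by norm_num)
  have hhalf : ∀ t ≥ T', ψ (4/3 * t) ≤ ψ t / 2 := by
    intro t ht
    have ht1 : (1:ℝ) ≤ t := le_trans hT'1 ht
    have hηt := hη t ht1
    have hμt : (3:ℝ) ≤ t / (η t - t) := hT t (le_trans (le_max_left _ _) ht)
    have hpos' : 0 < η t - t := by linarith [hηt.1]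
    rw [le_div_iff₀ hpos'] at hμt
    have : η t ≤ 4/3 * t := by linarith
    calc ψ (4/3 * t) ≤ ψ (η t) := hanti (by simp only [Set.mem_Ici]; linarith [hηt.1])
            (by simp only [Set.mem_Ici]; linarith) this
      _ = ψ t / 2 := hηt.2
  have hiter : ∀ m : ℕ, ψ (T' * (4/3)^m) ≤ ψ T' / 2^m := by
    intro m
    induction m with
    | zero => simp
    | succ m ih =>
      have h1 : T' ≤ T' * (4/3)^m := by nlinarith [hpow m]
      calc ψ (T' * (4/3)^(m+1)) = ψ (4/3 * (T' * (4/3)^m)) := by ring_nf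
        _ ≤ ψ (T' * (4/3)^m) / 2 := hhalf _ h1
        _ ≤ (ψ T' / 2^m) / 2 := by linarith
        _ = ψ T' / 2^(m+1) := by ring
  have hdecay : ∀ y ≥ T', ψ y ≤ 2 * ψ T' * (T'/y)^2 := by
    intro y hy
    have hT'pos : (0:ℝ) < T' := by linarith
    have hyT : 1 ≤ y / T' := (one_le_div hT'pos).2 hy
    obtain ⟨N, hN⟩ := pow_unbounded_of_one_lt (y/T') (show (1:ℝ) < 4/3 by norm_num)
    have hNe : ∃ m, y / T' < (4/3)^(m+1) := ⟨N, lt_of_lt_of_le hN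
      (pow_le_pow_right₀ (by norm_num) (Nat.le_succ N))⟩
    set m := Nat.find hNe with hm
    have hm2 : y / T' < (4/3)^(m+1) := Nat.find_spec hNe
    have hm1 : (4/3:ℝ)^m ≤ y / T' := by
      rcases Nat.eq_zero_or_pos m with h0 | h0
      · simpa [h0] using hyT
      · have h4 := Nat.find_min hNe (show m - 1 < m from Nat.sub_lt h0 one_pos)
        push_neg at h4
        rw [Nat.sub_add_cancel h0] at h4
        exact h4
    have h1 : T' * (4/3)^m ≤ y := (le_div_iff₀' hT'pos).1 hm1
    have h2 : ψ y ≤ ψ T' / 2^m := by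
      refine le_trans (hanti ?_ ?_ h1) (hiter m)
      · simp only [Set.mem_Ici]; nlinarith [hpow m]
      · simp only [Set.mem_Ici]; nlinarith [hpow m]
    have h3 : (y/T')^2 ≤ 2^(m+1) := by
      calc (y/T')^2 ≤ ((4/3:ℝ)^(m+1))^2 := by
            apply pow_le_pow_left₀ (by positivity) hm2.le
        _ = (16/9:ℝ)^(m+1) := by
            rw [← pow_mul, show (16/9:ℝ) = (4/3)^2 by norm_num, ← pow_mul, Nat.mul_comm]
        _ ≤ 2^(m+1) := by apply pow_le_pow_left₀ (by norm_num) (by norm_num)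
    have hψT : 0 < ψ T' := hpos T' hT'1
    have hy1 : (0:ℝ) < y := by linarith
    calc ψ y ≤ ψ T' / 2^m := h2
      _ = 2 * ψ T' * T'^2 / (2^(m+1) * T'^2) := by field_simp; ring
      _ ≤ 2 * ψ T' * T'^2 / (y^2) := by
          have h3' : y^2 ≤ 2^(m+1) * T'^2 := by
            rw [div_pow, div_le_iff₀ (by positivity)] at h3
            linarith
          gcongr
      _ = 2 * ψ T' * (T'/y)^2 := by field_simp
  set K : ℕ := ⌈T'⌉₊ with hK
  rw [← summable_nat_add_iff K]
  refine Summable.of_nonneg_of_le (f := fun k : ℕ => (2 * ψ T' * T'^2) * (1/((k:ℝ)+1)^2))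
    (fun k => le_of_lt (hpos _ (by
      have h := Nat.cast_nonneg (α := ℝ) (k + K); linarith))) (fun k => ?_) ?_
  · have hceil : T' ≤ (K:ℝ) := Nat.le_ceil T'
    have hxk : T' ≤ x + ((k + K : ℕ):ℝ) := by
      push_cast
      have := Nat.cast_nonneg (α := ℝ) k
      linarith
    have h1 : (k:ℝ) + 1 ≤ x + ((k + K : ℕ):ℝ) := by
      push_cast
      have := Nat.cast_nonneg (α := ℝ) K
      linarith
    have hT'pos : (0:ℝ) < T' := by linarith
    have hψT : 0 < ψ T' := hpos T' hT'1
    calc ψ (x + ((k + K : ℕ):ℝ)) ≤ 2 * ψ T' * (T' / (x + ((k+K:ℕ):ℝ)))^2 := hdecay _ hxk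
      _ ≤ 2 * ψ T' * (T' / ((k:ℝ)+1))^2 := by
          gcongr
      _ = (2 * ψ T' * T'^2) * (1/((k:ℝ)+1)^2) := by
          rw [div_pow, one_div]
          ring
  · apply Summable.mul_left
    have h2 : Summable (fun k : ℕ => 1/((k:ℝ))^2) := by
      simpa using Real.summable_one_div_nat_pow.2 (le_refl 2)
    rw [← summable_nat_add_iff 1] at h2
    apply h2.congr
    intro k
    push_cast
    ring

lemma cos_sum_bound (x c : ℝ) (hs : Real.sin (x/2) ≠ 0) (m : ℕ) :
    |∑ k ∈ Finset.range m, Real.cos (c + k * x)| ≤ 1 / |Real.sin (x/2)| := by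
  have key : ∀ θ : ℝ, Real.cos θ * (2 * Real.sin (x/2))
      = Real.sin (θ + x/2) - Real.sin (θ - x/2) := by
    intro θ
    rw [Real.sin_add, Real.sin_sub]
    ring
  have tele : (∑ k ∈ Finset.range m, Real.cos (c + k * x)) * (2 * Real.sin (x/2))
      = Real.sin (c + m * x - x/2) - Real.sin (c - x/2) := by
    rw [Finset.sum_mul]
    have : ∀ k : ℕ, Real.cos (c + k * x) * (2 * Real.sin (x/2))
        = Real.sin (c + (k+1 : ℕ) * x - x/2) - Real.sin (c + (k:ℕ) * x - x/2) := by
      intro k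
      rw [key]
      push_cast
      ring_nf
    rw [Finset.sum_congr rfl (fun k _ => this k), Finset.sum_range_sub
      (fun k : ℕ => Real.sin (c + k * x - x/2))]
    norm_num
  have habs : |∑ k ∈ Finset.range m, Real.cos (c + k * x)| * (2 * |Real.sin (x/2)|) ≤ 2 := by
    calc |∑ k ∈ Finset.range m, Real.cos (c + k * x)| * (2 * |Real.sin (x/2)|)
        = |(∑ k ∈ Finset.range m, Real.cos (c + k * x)) * (2 * Real.sin (x/2))| := by
          rw [abs_mul, abs_mul]
          norm_num
      _ = |Real.sin (c + m * x - x/2) - Real.sin (c - x/2)| := by rw [tele]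
      _ ≤ |Real.sin (c + m * x - x/2)| + |Real.sin (c - x/2)| := abs_sub _ _
      _ ≤ 1 + 1 := add_le_add (Real.abs_sin_le_one _) (Real.abs_sin_le_one _)
      _ = 2 := by norm_num
  have hpos : 0 < |Real.sin (x/2)| := abs_pos.2 hs
  rw [le_div_iff₀ hpos]
  linarith [habs]

lemma abel_tail (f c : ℕ → ℝ) (M : ℝ)
    (hf0 : ∀ k, 0 ≤ f k) (hfa : ∀ k, f (k+1) ≤ f k)
    (hc : ∀ m, |∑ k ∈ Finset.range m, c k| ≤ M)
    (hsum : Summable (fun k => f k * c k)) :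
    |∑' k, f k * c k| ≤ f 0 * M := by
  have hM : 0 ≤ M := by simpa using hc 0
  have hmono : ∀ i j : ℕ, i ≤ j → f j ≤ f i := by
    intro i j hij
    induction j with
    | zero => simp_all
    | succ j ih =>
      rcases Nat.lt_or_ge i (j+1) with h | h
      · exact le_trans (hfa j) (ih (Nat.lt_succ_iff.1 h))
      · have : i = j + 1 := le_antisymm hij h
        simp [this]
  have hfin : ∀ N : ℕ, |∑ k ∈ Finset.range N, f k * c k| ≤ f 0 * M := by
    intro N
    rcases Nat.eq_zero_or_pos N with rfl | hN
    · simpa using mul_nonneg (hf0 0) hM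
    have hby := Finset.sum_range_by_parts f c N
    simp only [smul_eq_mul] at hby
    rw [hby]
    have h1 : |f (N-1) * ∑ i ∈ Finset.range N, c i| ≤ f (N-1) * M := by
      rw [abs_mul, abs_of_nonneg (hf0 _)]
      exact mul_le_mul_of_nonneg_left (hc N) (hf0 _)
    have h2 : |∑ i ∈ Finset.range (N-1), (f (i+1) - f i) * ∑ j ∈ Finset.range (i+1), c j|
        ≤ (f 0 - f (N-1)) * M := by
      calc |∑ i ∈ Finset.range (N-1), (f (i+1) - f i) * ∑ j ∈ Finset.range (i+1), c j|
          ≤ ∑ i ∈ Finset.range (N-1), |(f (i+1) - f i) * ∑ j ∈ Finset.range (i+1), c j| :=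
            Finset.abs_sum_le_sum_abs _ _
        _ ≤ ∑ i ∈ Finset.range (N-1), (f i - f (i+1)) * M := by
            apply Finset.sum_le_sum
            intro i _
            rw [abs_mul, abs_of_nonpos (by linarith [hfa i]), neg_sub]
            exact mul_le_mul_of_nonneg_left (hc (i+1)) (by linarith [hfa i])
        _ = (f 0 - f (N-1)) * M := by
            rw [← Finset.sum_mul, Finset.sum_range_sub' f]
      done
    calc |f (N-1) * ∑ i ∈ Finset.range N, c i
          - ∑ i ∈ Finset.range (N-1), (f (i+1) - f i) * ∑ j ∈ Finset.range (i+1), c j|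
        ≤ |f (N-1) * ∑ i ∈ Finset.range N, c i|
          + |∑ i ∈ Finset.range (N-1), (f (i+1) - f i) * ∑ j ∈ Finset.range (i+1), c j| :=
          abs_sub _ _
      _ ≤ f (N-1) * M + (f 0 - f (N-1)) * M := add_le_add h1 h2
      _ = f 0 * M := by ring
  have htend : Tendsto (fun N => ∑ k ∈ Finset.range N, f k * c k) atTop
      (nhds (∑' k, f k * c k)) := hsum.hasSum.tendsto_sum_nat
  have : Tendsto (fun N => |∑ k ∈ Finset.range N, f k * c k|) atTop
      (nhds |∑' k, f k * c k|) := htend.abs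
  exact le_of_tendsto this (Eventually.of_forall hfin)

lemma summable_series (a : ℕ → ℝ) (ha0 : ∀ k, 0 ≤ a k) (hsum : Summable a)
    (g : ℕ → ℝ) (hg : ∀ k, |g k| ≤ 1) : Summable (fun k => a k * g k) := by
  apply Summable.of_norm_bounded hsum
  intro k
  rw [Real.norm_eq_abs, abs_mul, abs_of_nonneg (ha0 k)]
  calc a k * |g k| ≤ a k * 1 := mul_le_mul_of_nonneg_left (hg k) (ha0 k)
    _ = a k := mul_one _

lemma pointwise_bound (a : ℕ → ℝ) (ha0 : ∀ k, 0 ≤ a k) (haa : ∀ k, a (k+1) ≤ a k)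
    (hsum : Summable a) (n : ℕ) (c t : ℝ) (hs : Real.sin (t/2) ≠ 0) (K : ℕ) :
    |∑' k : ℕ, a k * Real.cos (((n:ℝ) + k) * t + c)|
      ≤ (∑ k ∈ Finset.range K, a k) + a K / |Real.sin (t/2)| := by
  have hsum' : Summable (fun k : ℕ => a k * Real.cos (((n:ℝ) + k) * t + c)) :=
    summable_series a ha0 hsum _ (fun k => Real.abs_cos_le_one _)
  rw [← hsum'.sum_add_tsum_nat_add K]
  have h1 : |∑ k ∈ Finset.range K, a k * Real.cos (((n:ℝ) + k) * t + c)|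
      ≤ ∑ k ∈ Finset.range K, a k := by
    calc |∑ k ∈ Finset.range K, a k * Real.cos (((n:ℝ) + k) * t + c)|
        ≤ ∑ k ∈ Finset.range K, |a k * Real.cos (((n:ℝ) + k) * t + c)| :=
          Finset.abs_sum_le_sum_abs _ _
      _ ≤ ∑ k ∈ Finset.range K, a k := by
          apply Finset.sum_le_sum
          intro k _
          rw [abs_mul, abs_of_nonneg (ha0 k)]
          calc a k * |Real.cos (((n:ℝ) + k) * t + c)| ≤ a k * 1 :=
              mul_le_mul_of_nonneg_left (Real.abs_cos_le_one _) (ha0 k)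
            _ = a k := mul_one _
  have h2 : |∑' k : ℕ, a (k + K) * Real.cos (((n:ℝ) + (k + K : ℕ)) * t + c)|
      ≤ a K / |Real.sin (t/2)| := by
    have heq : ∀ k : ℕ, a (k + K) * Real.cos (((n:ℝ) + (k + K : ℕ)) * t + c)
        = (fun i => a (i + K)) k * (fun i : ℕ => Real.cos ((((n:ℝ) + K) * t + c) + i * t)) k := by
      intro k
      simp only
      congr 1
      push_cast
      ring_nf
    rw [tsum_congr heq]
    have := abel_tail (fun i => a (i + K)) (fun i : ℕ => Real.cos ((((n:ℝ) + K) * t + c) + i * t))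
      (1 / |Real.sin (t/2)|) (fun k => ha0 _)
      (fun k => by
        show a (k + 1 + K) ≤ a (k + K)
        rw [show k + 1 + K = k + K + 1 by omega]
        exact haa (k+K))
      (fun m => cos_sum_bound t _ hs m) ?_
    · refine le_trans this (le_of_eq ?_)
      show a (0 + K) * (1/|Real.sin (t/2)|) = _
      rw [Nat.zero_add]
      ring
    · apply summable_series _ (fun k => ha0 _) ((summable_nat_add_iff K).2 hsum)
        _ (fun k => Real.abs_cos_le_one _)
  calc |(∑ k ∈ Finset.range K, a k * Real.cos (((n:ℝ) + k) * t + c))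
        + ∑' k : ℕ, a (k + K) * Real.cos (((n:ℝ) + (k + K : ℕ)) * t + c)|
      ≤ |∑ k ∈ Finset.range K, a k * Real.cos (((n:ℝ) + k) * t + c)|
        + |∑' k : ℕ, a (k + K) * Real.cos (((n:ℝ) + (k + K : ℕ)) * t + c)| := abs_add_le _ _
    _ ≤ (∑ k ∈ Finset.range K, a k) + a K / |Real.sin (t/2)| := add_le_add h1 h2

lemma geom_id : ∀ J : ℕ, ∑ j ∈ Finset.range J, (1/2:ℝ)^j = 2 - 2*(1/2)^J := by
  intro J
  induction J with
  | zero => norm_num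
  | succ J ih => rw [Finset.sum_range_succ, ih]; ring

lemma geom_j_id : ∀ J : ℕ, ∑ j ∈ Finset.range J, (j:ℝ)*(1/2)^j = 2 - 2*((J:ℝ)+1)*(1/2)^J := by
  intro J
  induction J with
  | zero => norm_num
  | succ J ih => rw [Finset.sum_range_succ, ih]; push_cast; ring

lemma nat_le_two_pow_inv : ∀ J : ℕ, (J:ℝ) * (1/2)^J ≤ 1 := by
  intro J
  have h := Nat.lt_two_pow_self (n := J)
  have h2 : (J:ℝ) < 2^J := by
    exact_mod_cast h
  have h3 : (0:ℝ) < 2^J := by positivity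
  rw [one_div, inv_pow, mul_inv_le_iff₀ h3, one_mul]
  exact h2.le

lemma harm_le : ∀ N : ℕ, 1 ≤ N → ∑ k ∈ Finset.range N, 1/((k:ℝ)+1) ≤ 1 + Real.log N := by
  intro N
  induction N with
  | zero => intro h; omega
  | succ N ih =>
    intro _
    rcases Nat.eq_zero_or_pos N with rfl | hN
    · norm_num
    have hNpos : (0:ℝ) < N := by exact_mod_cast hN
    have hN1pos : (0:ℝ) < (N:ℝ)+1 := by linarith
    have hlog : 1/((N:ℝ)+1) ≤ Real.log ((N:ℝ)+1) - Real.log N := by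
      have h1 : Real.log ((N:ℝ)/((N:ℝ)+1)) ≤ (N:ℝ)/((N:ℝ)+1) - 1 :=
        Real.log_le_sub_one_of_pos (by positivity)
      rw [Real.log_div (ne_of_gt hNpos) (ne_of_gt hN1pos)] at h1
      have h2 : (N:ℝ)/((N:ℝ)+1) - 1 = -(1/((N:ℝ)+1)) := by field_simp; ring
      rw [h2] at h1
      linarith
    have := ih hN
    rw [Finset.sum_range_succ]
    push_cast
    linarith

lemma abel_id (G : ℕ → ℝ) (hG0 : G 0 = 0) :
    ∀ J : ℕ, ∑ j ∈ Finset.range J, (1/2:ℝ)^j * (G (j+1) - G j)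
      = (∑ j ∈ Finset.Ico 1 J, (1/2:ℝ)^j * G j) + 2*(1/2:ℝ)^J * G J := by
  intro J
  induction J with
  | zero => simp [hG0]
  | succ J ih =>
    rcases Nat.eq_zero_or_pos J with rfl | hJ
    · simp [hG0]
    · rw [Finset.sum_range_succ, ih, Finset.sum_Ico_succ_top (a := 1) (b := J) hJ]
      ring

lemma abel_est (G : ℕ → ℝ) (A B : ℝ) (hA : 0 ≤ A) (hB : 0 ≤ B) (hG0 : G 0 = 0)
    (hGb : ∀ j, G j ≤ A + B * j) (hGnn : ∀ j, 0 ≤ G j) :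
    ∀ J : ℕ, ∑ j ∈ Finset.range J, (1/2:ℝ)^j * (G (j+1) - G j) ≤ 3*A + 4*B := by
  intro J
  rw [abel_id G hG0 J]
  have h1 : (∑ j ∈ Finset.Ico 1 J, (1/2:ℝ)^j * G j)
      ≤ A * (∑ j ∈ Finset.Ico 1 J, (1/2:ℝ)^j) + B * (∑ j ∈ Finset.Ico 1 J, (j:ℝ)*(1/2)^j) := by
    calc (∑ j ∈ Finset.Ico 1 J, (1/2:ℝ)^j * G j)
        ≤ ∑ j ∈ Finset.Ico 1 J, (1/2:ℝ)^j * (A + B * j) := by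
          apply Finset.sum_le_sum
          intro j _
          exact mul_le_mul_of_nonneg_left (hGb j) (by positivity)
      _ = A * (∑ j ∈ Finset.Ico 1 J, (1/2:ℝ)^j) + B * (∑ j ∈ Finset.Ico 1 J, (j:ℝ)*(1/2)^j) := by
          rw [Finset.mul_sum, Finset.mul_sum, ← Finset.sum_add_distrib]
          apply Finset.sum_congr rfl
          intro j _
          ring
  have h2 : (∑ j ∈ Finset.Ico 1 J, (1/2:ℝ)^j) ≤ 1 := by
    rcases Nat.eq_zero_or_pos J with rfl | hJ
    · simp
    rw [Finset.sum_Ico_eq_sub _ hJ, geom_id J]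
    have : (0:ℝ) ≤ (1/2:ℝ)^J := by positivity
    simp only [Finset.range_one, Finset.sum_singleton, pow_zero]
    linarith
  have h3 : (∑ j ∈ Finset.Ico 1 J, (j:ℝ)*(1/2)^j) ≤ 2 := by
    rcases Nat.eq_zero_or_pos J with rfl | hJ
    · simp
    rw [Finset.sum_Ico_eq_sub _ hJ, geom_j_id J]
    have h4 : (0:ℝ) ≤ ((J:ℝ)+1)*(1/2)^J := by positivity
    simp only [Finset.range_one, Finset.sum_singleton, Nat.cast_zero, zero_mul, pow_zero]
    linarith
  have h5 : 2*(1/2:ℝ)^J * G J ≤ 2*A + 2*B := by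
    have hGJ := hGb J
    have hp : (0:ℝ) < (1/2:ℝ)^J := by positivity
    have hple : (1/2:ℝ)^J ≤ 1 := by
      apply pow_le_one₀ <;> norm_num
    calc 2*(1/2:ℝ)^J * G J ≤ 2*(1/2:ℝ)^J * (A + B * J) := by
          apply mul_le_mul_of_nonneg_left hGJ (by positivity)
      _ = 2*A*(1/2:ℝ)^J + 2*B*((J:ℝ)*(1/2)^J) := by ring
      _ ≤ 2*A + 2*B := by
          have := nat_le_two_pow_inv J
          nlinarith
  have hsum2 : (0:ℝ) ≤ ∑ j ∈ Finset.Ico 1 J, (j:ℝ)*(1/2)^j :=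
    Finset.sum_nonneg (fun j _ => by positivity)
  have hsum1 : (0:ℝ) ≤ ∑ j ∈ Finset.Ico 1 J, (1/2:ℝ)^j :=
    Finset.sum_nonneg (fun j _ => by positivity)
  nlinarith [h1, h2, h3, h5]

lemma tail_bound {ψ η : ℝ → ℝ} (hpos : ∀ t ≥ (1:ℝ), 0 < ψ t)
    (hanti : AntitoneOn ψ (Set.Ici 1))
    (hη : ∀ t ≥ (1:ℝ), t < η t ∧ ψ (η t) = ψ t / 2)
    (hμ : MonotoneOn (fun t => t / (η t - t)) (Set.Ici 1))
    (n : ℕ) (hn : 1 ≤ n)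
    (hsum : Summable (fun k : ℕ => ψ (3*(n:ℝ) + k))) :
    ∑' k : ℕ, ψ (3*(n:ℝ) + k) / ((k:ℝ)+1)
      ≤ 28 * ψ (3*(n:ℝ)) * (1 + max 0 (Real.log (η n - n))) := by
  have hn1 : (1:ℝ) ≤ (n:ℝ) := by exact_mod_cast hn
  set x : ℝ := 3*(n:ℝ) with hxdef
  have hx1 : (1:ℝ) ≤ x := by simp only [hxdef]; linarith
  have hnx : (n:ℝ) ≤ x := by simp only [hxdef]; linarith
  have hψx : 0 < ψ x := hpos x hx1
  have hηx := hη x hx1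
  have hηn := hη (n:ℝ) hn1
  set d : ℝ := η x - x with hddef
  set hh : ℝ := η (n:ℝ) - (n:ℝ) with hhdef
  have hd0 : 0 < d := by simp only [hddef]; linarith [hηx.1]
  have hh0 : 0 < hh := by simp only [hhdef]; linarith [hηn.1]
  have hd3h : d ≤ 3 * hh := by
    have := hμ (show (n:ℝ) ∈ Set.Ici 1 from hn1) (show x ∈ Set.Ici 1 from hx1) hnx
    simp only at this
    rw [div_le_div_iff₀ hh0 hd0] at this
    simp only [hxdef] at this ⊢
    nlinarith
  set r : ℝ := d / x with hrdef
  have hr0 : 0 < r := div_pos hd0 (by linarith)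
  have hrd : r ≤ d := by
    rw [hrdef, div_le_iff₀ (by linarith : (0:ℝ) < x)]
    nlinarith
  set T : ℕ → ℝ := fun j => η^[j] x with hTdef
  have hT0 : T 0 = x := rfl
  have hTsucc : ∀ j, T (j+1) = η (T j) := by
    intro j
    simp only [hTdef, Function.iterate_succ_apply']
  -- main induction facts
  have hTfacts : ∀ j : ℕ, x ≤ T j ∧ ψ (T j) = ψ x * (1/2)^j ∧ T j ≤ x * (1+r)^j := by
    intro j
    induction j with
    | zero => refine ⟨le_refl x, by simp [hT0], by simp [hT0]⟩
    | succ j ih =>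
      obtain ⟨h1, h2, h3⟩ := ih
      have hTj1 : (1:ℝ) ≤ T j := le_trans hx1 h1
      have hηTj := hη (T j) hTj1
      have hstep : η (T j) - T j ≤ T j * r := by
        have hmono := hμ (show x ∈ Set.Ici 1 from hx1)
          (show T j ∈ Set.Ici 1 from hTj1) h1
        simp only at hmono
        have hd1 : 0 < η (T j) - T j := by linarith [hηTj.1]
        rw [div_le_div_iff₀ hd0 hd1] at hmono
        rw [hrdef]
        rw [mul_div_assoc', le_div_iff₀ (by linarith : (0:ℝ) < x)]
        nlinarith
      constructor
      · rw [hTsucc j]; linarith [hηTj.1]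
      constructor
      · rw [hTsucc j, hηTj.2, h2]; ring
      · rw [hTsucc j]
        have hp : (1:ℝ) ≤ (1+r)^j := one_le_pow₀ (by linarith)
        calc η (T j) ≤ T j * (1+r) := by linarith
          _ ≤ x * (1+r)^j * (1+r) := by nlinarith
          _ = x * (1+r)^(j+1) := by ring
  set N : ℕ → ℕ := fun j => ⌈T j - x⌉₊ with hNdef
  have hN0 : N 0 = 0 := by simp [hNdef, hT0]
  have hTmono : ∀ j, T j ≤ T (j+1) := by
    intro j
    rw [hTsucc j]
    have hTj1 : (1:ℝ) ≤ T j := le_trans hx1 (hTfacts j).1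
    linarith [(hη (T j) hTj1).1]
  have hNmono : ∀ j, N j ≤ N (j+1) := by
    intro j
    apply Nat.ceil_le_ceil
    linarith [hTmono j]
  -- block decay
  have hblock : ∀ j : ℕ, ∀ k : ℕ, N j ≤ k → ψ (x + k) ≤ ψ x * (1/2)^j := by
    intro j k hk
    have h1 : T j - x ≤ (N j : ℝ) := Nat.le_ceil _
    have h2 : (N j : ℝ) ≤ (k : ℝ) := by exact_mod_cast hk
    have h3 : T j ≤ x + k := by linarith
    have hTj1 : (1:ℝ) ≤ T j := le_trans hx1 (hTfacts j).1
    have hxk1 : (1:ℝ) ≤ x + k := by linarith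
    have hle : ψ (x + k) ≤ ψ (T j) :=
      hanti (Set.mem_Ici.2 hTj1) (Set.mem_Ici.2 hxk1) h3
    calc ψ (x + k) ≤ ψ (T j) := hle
      _ = ψ x * (1/2)^j := (hTfacts j).2.1
  -- N upper bound
  have hNub : ∀ j : ℕ, (N j : ℝ) ≤ 1 + d * ((j:ℝ) * (1+r)^j) := by
    intro j
    have h1 : T j - x ≤ x * (1+r)^j - x := by linarith [(hTfacts j).2.2]
    have h2 : (N j : ℝ) < (T j - x) + 1 := Nat.ceil_lt_add_one (by linarith [(hTfacts j).1])
    have h3 : x * ((1+r)^j - 1) = d * ∑ i ∈ Finset.range j, (1+r)^i := by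
      have hg := geom_sum_mul (1+r) j
      have he : (1+r) - 1 = r := by ring
      rw [he] at hg
      have hxr : x * r = d := by
        rw [hrdef]
        field_simp
      calc x * ((1+r)^j - 1) = x * ((∑ i ∈ Finset.range j, (1+r)^i) * r) := by rw [hg]
        _ = (x * r) * (∑ i ∈ Finset.range j, (1+r)^i) := by ring
        _ = d * ∑ i ∈ Finset.range j, (1+r)^i := by rw [hxr]
    have h4 : (∑ i ∈ Finset.range j, (1+r)^i) ≤ (j:ℝ) * (1+r)^j := by
      calc (∑ i ∈ Finset.range j, (1+r)^i) ≤ ∑ i ∈ Finset.range j, (1+r)^j := by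
            apply Finset.sum_le_sum
            intro i hi
            apply pow_le_pow_right₀ (by linarith) (Finset.mem_range.1 hi).le
        _ = (j:ℝ) * (1+r)^j := by
            rw [Finset.sum_const, Finset.card_range, nsmul_eq_mul]
    have h5 : d * ∑ i ∈ Finset.range j, (1+r)^i ≤ d * ((j:ℝ) * (1+r)^j) :=
      mul_le_mul_of_nonneg_left h4 hd0.le
    have h6 : x * (1+r)^j - x = x * ((1+r)^j - 1) := by ring
    linarith [h1, h2, h5, h3, h6]
  -- harmonic-of-N sequence
  set G : ℕ → ℝ := fun j => ∑ k ∈ Finset.range (N j), 1/((k:ℝ)+1) with hGdef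
  have hG0 : G 0 = 0 := by simp [hGdef, hN0]
  have hGnn : ∀ j, 0 ≤ G j := fun j => Finset.sum_nonneg (fun k _ => by positivity)
  have hlogd : 0 ≤ Real.log (1+d) := Real.log_nonneg (by linarith)
  have hlogr : 0 ≤ Real.log (1+r) := Real.log_nonneg (by linarith)
  set A : ℝ := 1 + Real.log (1+d) with hAdef
  set Bc : ℝ := 1 + Real.log (1+r) with hBcdef
  have hA0 : 0 ≤ A := by rw [hAdef]; linarith
  have hB0 : 0 ≤ Bc := by rw [hBcdef]; linarith
  have hGb : ∀ j, G j ≤ A + Bc * j := by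
    intro j
    have hj0 : (0:ℝ) ≤ (j:ℝ) := Nat.cast_nonneg j
    have hBj : Bc * j = (j:ℝ) + Real.log (1+r) * j := by rw [hBcdef]; ring
    rcases Nat.eq_zero_or_pos (N j) with h0 | h0
    · have : G j = 0 := by simp [hGdef, h0]
      rw [this]
      have : 0 ≤ Real.log (1+r) * j := mul_nonneg hlogr hj0
      rw [hAdef]
      linarith [hBj]
    · have hb1 : G j ≤ 1 + Real.log (N j) := harm_le (N j) h0
      have hNj1 : (1:ℝ) ≤ (N j : ℝ) := by exact_mod_cast h0
      have hp1 : (1:ℝ) ≤ (1+r)^j := one_le_pow₀ (by linarith)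
      have hNjle : (N j : ℝ) ≤ (1+d) * ((1+(j:ℝ)) * (1+r)^j) := by
        have h1 := hNub j
        nlinarith [mul_nonneg (mul_nonneg hd0.le hj0) (by positivity : (0:ℝ) ≤ (1+r)^j),
          mul_nonneg hd0.le hj0, mul_nonneg hj0 (by positivity : (0:ℝ) ≤ (1+r)^j)]
      have hloge : Real.log ((1+d) * ((1+(j:ℝ)) * (1+r)^j))
          = Real.log (1+d) + (Real.log (1+(j:ℝ)) + (j:ℝ)*Real.log (1+r)) := by
        rw [Real.log_mul (by positivity) (by positivity),
          Real.log_mul (by positivity) (by positivity), Real.log_pow]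
      have hlogj : Real.log (1+(j:ℝ)) ≤ (j:ℝ) := by
        have := Real.log_le_sub_one_of_pos (show (0:ℝ) < 1 + (j:ℝ) by positivity)
        linarith
      have hmono2 : Real.log (N j) ≤ Real.log ((1+d) * ((1+(j:ℝ)) * (1+r)^j)) :=
        Real.log_le_log (by linarith) hNjle
      rw [hAdef]
      rw [hloge] at hmono2
      linarith [hBj]
  -- split of partial sums into blocks
  have hsplit : ∀ J : ℕ, ∑ k ∈ Finset.range (N J), ψ (x + k)/((k:ℝ)+1)
      = ∑ j ∈ Finset.range J, ∑ k ∈ Finset.Ico (N j) (N (j+1)), ψ (x + k)/((k:ℝ)+1) := by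
    intro J
    induction J with
    | zero => simp [hN0]
    | succ J ih =>
      rw [Finset.sum_range_succ, ← ih, Finset.sum_range_add_sum_Ico _ (hNmono J)]
  have hblocksum : ∀ j : ℕ, ∑ k ∈ Finset.Ico (N j) (N (j+1)), ψ (x + k)/((k:ℝ)+1)
      ≤ ψ x * ((1/2)^j * (G (j+1) - G j)) := by
    intro j
    have hsub : ∑ k ∈ Finset.Ico (N j) (N (j+1)), 1/((k:ℝ)+1) = G (j+1) - G j := by
      rw [hGdef]
      exact Finset.sum_Ico_eq_sub _ (hNmono j)
    calc ∑ k ∈ Finset.Ico (N j) (N (j+1)), ψ (x + k)/((k:ℝ)+1)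
        ≤ ∑ k ∈ Finset.Ico (N j) (N (j+1)), (ψ x * (1/2)^j) * (1/((k:ℝ)+1)) := by
          apply Finset.sum_le_sum
          intro k hk
          rw [div_eq_mul_one_div]
          exact mul_le_mul_of_nonneg_right (hblock j k (Finset.mem_Ico.1 hk).1) (by positivity)
      _ = ψ x * ((1/2)^j * (G (j+1) - G j)) := by
          rw [← Finset.mul_sum, hsub]
          ring
  have hpartial : ∀ J : ℕ, ∑ k ∈ Finset.range (N J), ψ (x + k)/((k:ℝ)+1)
      ≤ ψ x * (3*A + 4*Bc) := by
    intro J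
    rw [hsplit J]
    calc ∑ j ∈ Finset.range J, ∑ k ∈ Finset.Ico (N j) (N (j+1)), ψ (x + k)/((k:ℝ)+1)
        ≤ ∑ j ∈ Finset.range J, ψ x * ((1/2)^j * (G (j+1) - G j)) :=
          Finset.sum_le_sum (fun j _ => hblocksum j)
      _ = ψ x * ∑ j ∈ Finset.range J, (1/2)^j * (G (j+1) - G j) := by rw [Finset.mul_sum]
      _ ≤ ψ x * (3*A + 4*Bc) :=
          mul_le_mul_of_nonneg_left (abel_est G A Bc hA0 hB0 hG0 hGb hGnn J) hψx.le
  have hJexists : ∀ M : ℕ, ∃ J : ℕ, M ≤ N J := by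
    intro M
    have hM0 : (0:ℝ) ≤ (M:ℝ) := Nat.cast_nonneg M
    have hpM : 0 < ψ (x + M) := hpos _ (by linarith)
    obtain ⟨J, hJ⟩ := exists_pow_lt_of_lt_one (div_pos hpM hψx) (show (1/2:ℝ) < 1 by norm_num)
    refine ⟨J, ?_⟩
    by_contra hcon
    push_neg at hcon
    have h1 : T J - x ≤ (N J : ℝ) := Nat.le_ceil _
    have h2 : (N J : ℝ) < (M:ℝ) := by exact_mod_cast hcon
    have h3 : T J ≤ x + M := by linarith
    have hTJ1 : (1:ℝ) ≤ T J := le_trans hx1 (hTfacts J).1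
    have h4 : ψ (x + M) ≤ ψ (T J) :=
      hanti (Set.mem_Ici.2 hTJ1) (Set.mem_Ici.2 (by linarith)) h3
    rw [(hTfacts J).2.1] at h4
    rw [lt_div_iff₀ hψx] at hJ
    nlinarith [hJ, h4]
  have hfinal : (∑' k : ℕ, ψ (x + k) / ((k:ℝ)+1)) ≤ ψ x * (3*A + 4*Bc) := by
    apply tsum_le_of_sum_range_le
      (fun k => div_nonneg (hpos _ (by linarith [Nat.cast_nonneg (α := ℝ) k])).le (by positivity))
    intro M
    obtain ⟨J, hJ⟩ := hJexists M
    calc ∑ k ∈ Finset.range M, ψ (x + k)/((k:ℝ)+1)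
        ≤ ∑ k ∈ Finset.range (N J), ψ (x + k)/((k:ℝ)+1) := by
          apply Finset.sum_le_sum_of_subset_of_nonneg (Finset.range_subset_range.2 hJ)
          intro k _ _
          exact div_nonneg (hpos _ (by linarith [Nat.cast_nonneg (α := ℝ) k])).le (by positivity)
      _ ≤ ψ x * (3*A + 4*Bc) := hpartial J
  -- constant chase
  set L : ℝ := max 0 (Real.log hh) with hLdef
  have hL0 : 0 ≤ L := le_max_left _ _
  have hlogmax : Real.log (max 1 hh) = L := by
    rcases le_total hh 1 with hc | hc
    · rw [max_eq_left hc, Real.log_one, hLdef]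
      symm
      exact max_eq_left (Real.log_nonpos hh0.le hc)
    · rw [max_eq_right hc, hLdef]
      symm
      exact max_eq_right (Real.log_nonneg hc)
  have hmax1 : (1:ℝ) ≤ max 1 hh := le_max_left _ _
  have h14 : 1 + d ≤ 4 * max 1 hh := by
    rcases le_total hh 1 with hc | hc
    · rw [max_eq_left hc]
      linarith
    · rw [max_eq_right hc]
      linarith
  have hlog4 : Real.log 4 ≤ 3 := by
    have := Real.log_le_sub_one_of_pos (show (0:ℝ) < 4 by norm_num)
    linarith
  have hA4L : A ≤ 4 + L := by
    have h5 : Real.log (1+d) ≤ Real.log (4 * max 1 hh) := Real.log_le_log (by linarith) h14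
    rw [Real.log_mul (by norm_num) (by linarith), hlogmax] at h5
    rw [hAdef]
    linarith
  have hBA : Bc ≤ A := by
    rw [hAdef, hBcdef]
    have : Real.log (1+r) ≤ Real.log (1+d) := Real.log_le_log (by linarith) (by linarith)
    linarith
  have hc1 : 3*A + 4*Bc ≤ 28*(1+L) := by linarith
  calc (∑' k : ℕ, ψ (x + k) / ((k:ℝ)+1)) ≤ ψ x * (3*A + 4*Bc) := hfinal
    _ ≤ ψ x * (28*(1+L)) := mul_le_mul_of_nonneg_left hc1 hψx.le
    _ = 28 * ψ x * (1 + L) := by ring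

lemma main_half (a : ℕ → ℝ) (ha0 : ∀ k, 0 ≤ a k) (haa : ∀ k, a (k+1) ≤ a k)
    (hsum : Summable a) (n : ℕ) (c : ℝ) :
    (∫ t in (0:ℝ)..π, |∑' k : ℕ, a k * Real.cos (((n:ℝ) + k) * t + c)|)
      ≤ 3 * π * ∑' k : ℕ, a k / (k+1) := by
  set Ψ : ℝ → ℝ := fun t => ∑' k : ℕ, a k * Real.cos (((n:ℝ) + k) * t + c) with hΨ
  set B : ℝ := ∑' k, a k with hB
  set S : ℝ := ∑' k : ℕ, a k / ((k:ℝ)+1) with hS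
  have hSsum : Summable (fun k : ℕ => a k / ((k:ℝ)+1)) := by
    apply Summable.of_nonneg_of_le (fun k => div_nonneg (ha0 k) (by positivity)) (fun k => ?_) hsum
    rw [div_le_iff₀ (by positivity)]
    nlinarith [ha0 k, Nat.cast_nonneg (α := ℝ) k]
  have hSnonneg : 0 ≤ S := tsum_nonneg (fun k => div_nonneg (ha0 k) (by positivity))
  have hcont : Continuous Ψ := by
    apply continuous_tsum (u := a) (fun k => by continuity) hsum
    intro k x
    rw [Real.norm_eq_abs, abs_mul, abs_of_nonneg (ha0 k)]
    calc a k * |Real.cos (((n:ℝ) + k) * x + c)| ≤ a k * 1 :=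
        mul_le_mul_of_nonneg_left (Real.abs_cos_le_one _) (ha0 k)
      _ = a k := mul_one _
  have hint : ∀ p q : ℝ, IntervalIntegrable (fun t => |Ψ t|) volume p q :=
    fun p q => (hcont.abs).intervalIntegrable p q
  have hBdd : ∀ t, |Ψ t| ≤ B := by
    intro t
    have h1 : Summable (fun k => ‖a k * Real.cos (((n:ℝ) + k) * t + c)‖) := by
      simp only [Real.norm_eq_abs]
      apply Summable.of_nonneg_of_le (fun k => abs_nonneg _) (fun k => ?_) hsum
      rw [abs_mul, abs_of_nonneg (ha0 k)]
      nlinarith [Real.abs_cos_le_one (((n:ℝ) + k) * t + c), ha0 k,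
        abs_nonneg (Real.cos (((n:ℝ) + k) * t + c))]
    calc |Ψ t| ≤ ∑' k, ‖a k * Real.cos (((n:ℝ) + k) * t + c)‖ := norm_tsum_le_tsum_norm h1
      _ ≤ B := by
        apply Summable.tsum_le_tsum _ h1 hsum
        intro k
        rw [Real.norm_eq_abs, abs_mul, abs_of_nonneg (ha0 k)]
        nlinarith [Real.abs_cos_le_one (((n:ℝ) + k) * t + c), ha0 k]
  have hB0 : 0 ≤ B := tsum_nonneg ha0
  have sin_lb : ∀ x : ℝ, 0 < x → x ≤ π → x/π ≤ Real.sin (x/2) := by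
    intro x hx1 hx2
    have := Real.mul_le_sin (x := x/2) (by linarith) (by linarith)
    calc x/π = 2/π * (x/2) := by ring
      _ ≤ Real.sin (x/2) := this
  set W : ℕ → ℝ := fun k => (∑ i ∈ Finset.range k, a i) + ((k:ℝ)+1) * a k with hW
  have hW0 : ∀ k, 0 ≤ W k := by
    intro k
    exact add_nonneg (Finset.sum_nonneg (fun i _ => ha0 i)) (mul_nonneg (by positivity) (ha0 k))
  -- key interval estimate
  have key : ∀ j : ℕ, (∫ t in (π/((j:ℝ)+2))..(π/((j:ℝ)+1)), |Ψ t|)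
      ≤ (π/((j:ℝ)+1) - π/((j:ℝ)+2)) * W (j+1) := by
    intro j
    have hj1 : (0:ℝ) < (j:ℝ)+1 := by positivity
    have hj2 : (0:ℝ) < (j:ℝ)+2 := by positivity
    have hpq : π/((j:ℝ)+2) ≤ π/((j:ℝ)+1) := by
      apply div_le_div_of_nonneg_left pi_pos.le hj1
      linarith
    have hptw : ∀ x ∈ Set.uIoc (π/((j:ℝ)+2)) (π/((j:ℝ)+1)), ‖|Ψ x|‖ ≤ W (j+1) := by
      intro x hx
      rw [Set.uIoc_of_le hpq] at hx
      obtain ⟨hx1, hx2⟩ := hx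
      have hx0 : 0 < x := lt_trans (by positivity) hx1
      have hxπ : x ≤ π := le_trans hx2 (by
        rw [div_le_iff₀ hj1]
        nlinarith [pi_pos])
      have hsin : 1/((j:ℝ)+2) < Real.sin (x/2) := by
        have hx1' : π < x * ((j:ℝ)+2) := by
          rw [div_lt_iff₀ hj2] at hx1
          linarith
        calc 1/((j:ℝ)+2) < x/π := by
              rw [div_lt_div_iff₀ hj2 pi_pos]
              linarith
          _ ≤ Real.sin (x/2) := sin_lb x hx0 hxπ
      have hsinpos : 0 < Real.sin (x/2) := lt_trans (by positivity) hsin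
      have hs0 : Real.sin (x/2) ≠ 0 := ne_of_gt hsinpos
      have hpb := pointwise_bound a ha0 haa hsum n c x hs0 (j+1)
      rw [Real.norm_eq_abs, abs_abs]
      refine le_trans hpb ?_
      have habs : |Real.sin (x/2)| = Real.sin (x/2) := abs_of_pos hsinpos
      have hdivle : a (j+1) / |Real.sin (x/2)| ≤ ((j:ℝ)+2) * a (j+1) := by
        rw [habs, div_le_iff₀ hsinpos]
        rw [div_lt_iff₀ hj2] at hsin
        nlinarith [ha0 (j+1)]
      have : W (j+1) = (∑ i ∈ Finset.range (j+1), a i) + (((j+1:ℕ):ℝ)+1) * a (j+1) := rfl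
      rw [this]
      push_cast
      push_cast at hdivle ⊢
      linarith
    calc (∫ t in (π/((j:ℝ)+2))..(π/((j:ℝ)+1)), |Ψ t|)
        ≤ ‖∫ t in (π/((j:ℝ)+2))..(π/((j:ℝ)+1)), |Ψ t|‖ := le_abs_self _
      _ ≤ W (j+1) * |π/((j:ℝ)+1) - π/((j:ℝ)+2)| :=
          intervalIntegral.norm_integral_le_of_norm_le_const hptw
      _ = (π/((j:ℝ)+1) - π/((j:ℝ)+2)) * W (j+1) := by
          rw [abs_of_nonneg (by linarith)]
          ring
  -- partition identity
  have part : ∀ m : ℕ, (∫ t in (0:ℝ)..π, |Ψ t|)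
      = (∫ t in (0:ℝ)..(π/((m:ℝ)+1)), |Ψ t|)
        + ∑ j ∈ Finset.range m, ∫ t in (π/((j:ℝ)+2))..(π/((j:ℝ)+1)), |Ψ t| := by
    intro m
    induction m with
    | zero => norm_num
    | succ m ih =>
      rw [ih, Finset.sum_range_succ]
      have hcast : ((m+1:ℕ):ℝ) + 1 = (m:ℝ) + 2 := by push_cast; ring
      rw [hcast]
      have hadj := intervalIntegral.integral_add_adjacent_intervals
        (hint 0 (π/((m:ℝ)+2))) (hint (π/((m:ℝ)+2)) (π/((m:ℝ)+1)))
      rw [← hadj]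
      ring
  -- small piece
  have small : ∀ m : ℕ, (∫ t in (0:ℝ)..(π/((m:ℝ)+1)), |Ψ t|) ≤ B * (π/((m:ℝ)+1)) := by
    intro m
    have hm1 : (0:ℝ) < (m:ℝ)+1 := by positivity
    calc (∫ t in (0:ℝ)..(π/((m:ℝ)+1)), |Ψ t|)
        ≤ ‖∫ t in (0:ℝ)..(π/((m:ℝ)+1)), |Ψ t|‖ := le_abs_self _
      _ ≤ B * |π/((m:ℝ)+1) - 0| := intervalIntegral.norm_integral_le_of_norm_le_const
          (fun x _ => by rw [Real.norm_eq_abs, abs_abs]; exact hBdd x)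
      _ = B * (π/((m:ℝ)+1)) := by
          rw [sub_zero, abs_of_pos (by positivity)]
  -- V identity
  have Vid : ∀ m : ℕ, ∑ j ∈ Finset.range m,
        (∑ i ∈ Finset.range (j+1), a i)/(((j:ℝ)+1)*((j:ℝ)+2))
      = (∑ j ∈ Finset.range m, a j/((j:ℝ)+1))
        - (∑ i ∈ Finset.range m, a i)/((m:ℝ)+1) := by
    intro m
    induction m with
    | zero => norm_num
    | succ m ih =>
      rw [Finset.sum_range_succ, ih, Finset.sum_range_succ (fun j => a j/((j:ℝ)+1)),
        Finset.sum_range_succ a]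
      have hcast : ((m+1:ℕ):ℝ) = (m:ℝ) + 1 := by push_cast; ring
      rw [hcast]
      have hm1 : ((m:ℝ)+1) ≠ 0 := by positivity
      have hm2 : ((m:ℝ)+2) ≠ 0 := by positivity
      field_simp
      ring
  -- sum bound
  have sumb : ∀ m : ℕ, (∑ j ∈ Finset.range m, (π/((j:ℝ)+1) - π/((j:ℝ)+2)) * W (j+1))
      ≤ 3 * π * S := by
    intro m
    have h1 : ∀ j : ℕ, (π/((j:ℝ)+1) - π/((j:ℝ)+2)) * W (j+1)
        ≤ π * ((∑ i ∈ Finset.range (j+1), a i)/(((j:ℝ)+1)*((j:ℝ)+2)))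
          + 2 * π * (a (j+1) / (((j+1:ℕ):ℝ)+1)) := by
      intro j
      have hj1 : (0:ℝ) < (j:ℝ)+1 := by positivity
      have hj2 : (0:ℝ) < (j:ℝ)+2 := by positivity
      have hWe : W (j+1) = (∑ i ∈ Finset.range (j+1), a i) + (((j+1:ℕ):ℝ)+1) * a (j+1) := rfl
      have key2 : (π/((j:ℝ)+1) - π/((j:ℝ)+2)) * W (j+1)
          = π * ((∑ i ∈ Finset.range (j+1), a i)/(((j:ℝ)+1)*((j:ℝ)+2)))
            + π * a (j+1) / ((j:ℝ)+1) := by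
        rw [hWe]
        push_cast
        field_simp
        ring
      rw [key2]
      have e3 : π * a (j+1) / ((j:ℝ)+1) ≤ 2 * π * (a (j+1) / (((j+1:ℕ):ℝ)+1)) := by
        push_cast
        rw [div_le_iff₀ hj1, mul_comm (2*π), mul_assoc, div_mul_eq_mul_div, le_div_iff₀ (by positivity : (0:ℝ) < (j:ℝ)+1+1)]
        nlinarith [mul_nonneg (mul_nonneg pi_pos.le (ha0 (j+1))) (Nat.cast_nonneg (α := ℝ) j)]
      linarith
    calc (∑ j ∈ Finset.range m, (π/((j:ℝ)+1) - π/((j:ℝ)+2)) * W (j+1))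
        ≤ ∑ j ∈ Finset.range m, (π * ((∑ i ∈ Finset.range (j+1), a i)/(((j:ℝ)+1)*((j:ℝ)+2)))
            + 2 * π * (a (j+1) / (((j+1:ℕ):ℝ)+1))) := Finset.sum_le_sum (fun j _ => h1 j)
      _ = π * (∑ j ∈ Finset.range m, (∑ i ∈ Finset.range (j+1), a i)/(((j:ℝ)+1)*((j:ℝ)+2)))
            + 2 * π * (∑ j ∈ Finset.range m, a (j+1) / (((j+1:ℕ):ℝ)+1)) := by
          rw [Finset.sum_add_distrib, Finset.mul_sum, Finset.mul_sum]
      _ ≤ π * S + 2 * π * S := by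
          have t1 : (∑ j ∈ Finset.range m, (∑ i ∈ Finset.range (j+1), a i)/(((j:ℝ)+1)*((j:ℝ)+2)))
              ≤ S := by
            rw [Vid m]
            have h2 : (∑ j ∈ Finset.range m, a j/((j:ℝ)+1)) ≤ S :=
              Summable.sum_le_tsum _ (fun k _ => div_nonneg (ha0 k) (by positivity)) hSsum
            have h3 : 0 ≤ (∑ i ∈ Finset.range m, a i)/((m:ℝ)+1) := by
              apply div_nonneg (Finset.sum_nonneg (fun i _ => ha0 i))
              positivity
            linarith
          have t2 : (∑ j ∈ Finset.range m, a (j+1) / (((j+1:ℕ):ℝ)+1)) ≤ S := by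
            have h4 : (∑ j ∈ Finset.range m, a (j+1) / (((j+1:ℕ):ℝ)+1))
                ≤ ∑ j ∈ Finset.range (m+1), a j / ((j:ℝ)+1) := by
              rw [Finset.sum_range_succ' (fun j => a j / ((j:ℝ)+1)) m]
              have h0 : 0 ≤ a 0 / (((0:ℕ):ℝ)+1) := div_nonneg (ha0 0) (by norm_num)
              push_cast at h0 ⊢
              linarith
            exact le_trans h4 (Summable.sum_le_tsum _ (fun k _ => div_nonneg (ha0 k) (by positivity)) hSsum)
          nlinarith [pi_pos]
      _ = 3 * π * S := by ring
  -- assemble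
  have hall : ∀ m : ℕ, (∫ t in (0:ℝ)..π, |Ψ t|) ≤ (B*π) * (1/((m:ℝ)+1)) + 3 * π * S := by
    intro m
    rw [part m]
    calc (∫ t in (0:ℝ)..(π/((m:ℝ)+1)), |Ψ t|)
          + ∑ j ∈ Finset.range m, ∫ t in (π/((j:ℝ)+2))..(π/((j:ℝ)+1)), |Ψ t|
        ≤ B * (π/((m:ℝ)+1)) + ∑ j ∈ Finset.range m, (π/((j:ℝ)+1) - π/((j:ℝ)+2)) * W (j+1) := by
          apply add_le_add (small m)
          exact Finset.sum_le_sum (fun j _ => key j)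
      _ ≤ (B*π) * (1/((m:ℝ)+1)) + 3 * π * S := by
          have e : B * (π/((m:ℝ)+1)) = (B*π) * (1/((m:ℝ)+1)) := by ring
          rw [e]
          linarith [sumb m]
  have htend : Tendsto (fun m : ℕ => (B*π) * (1/((m:ℝ)+1)) + 3 * π * S) atTop
      (nhds (3 * π * S)) := by
    have h0 : Tendsto (fun m : ℕ => 1/((m:ℝ)+1)) atTop (nhds 0) :=
      tendsto_one_div_add_atTop_nhds_zero_nat
    have := (h0.const_mul (B*π)).add_const (3*π*S)
    simpa using this
  exact ge_of_tendsto' htend hall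


/-- Estimate (83): there is an absolute constant `C > 0` such that for every
`ψ ∈ 𝔐_∞^+`, `β ∈ ℝ` and `n ∈ ℕ`, the kernel
`Ψ_{n,β}(t) = ∑_{k=n}^∞ ψ(2n+k) cos(kt + βπ/2)` satisfies
`∫_0^{2π} |Ψ_{n,β}(t)| dt ≤ C ψ(3n)(1 + ln⁺(η(n) − n))`. -/
theorem statement18 :
    ∃ C : ℝ, 0 < C ∧ ∀ ψ η : ℝ → ℝ, IsMInfPlus ψ η → ∀ β : ℝ, ∀ n : ℕ, 1 ≤ n →
      (∫ t in (0:ℝ)..(2 * π),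
          |∑' k : ℕ, ψ (3 * (n : ℝ) + k) * Real.cos (((n : ℝ) + k) * t + β * π / 2)|) ≤
        C * ψ (3 * n) * (1 + max 0 (Real.log (η n - n))) := by
  refine ⟨1000, by norm_num, ?_⟩
  rintro ψ η ⟨hpos, hcont', hconv, htend, hη, hμ, hmu⟩ β n hn
  have hanti := psi_anti hpos hconv htend
  have hn1 : (1:ℝ) ≤ (n:ℝ) := by exact_mod_cast hn
  have hx1 : (1:ℝ) ≤ 3*(n:ℝ) := by linarith
  set γ : ℝ := β * π / 2 with hγdef
  set a : ℕ → ℝ := fun k => ψ (3*(n:ℝ) + k) with hadef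
  have hmem : ∀ k : ℕ, (1:ℝ) ≤ 3*(n:ℝ) + k := by
    intro k
    have := Nat.cast_nonneg (α := ℝ) k
    linarith
  have ha0 : ∀ k, 0 ≤ a k := fun k => (hpos _ (hmem k)).le
  have haa : ∀ k, a (k+1) ≤ a k := by
    intro k
    apply hanti (Set.mem_Ici.2 (hmem k)) (Set.mem_Ici.2 (hmem (k+1)))
    push_cast
    linarith
  have hsum : Summable a := psi_summable hpos hanti hη hmu hx1
  set S : ℝ := ∑' k : ℕ, a k / ((k:ℝ)+1) with hSdef
  have hScont : S ≤ 28 * ψ (3*(n:ℝ)) * (1 + max 0 (Real.log (η n - n))) :=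
    tail_bound hpos hanti hη hμ n hn hsum
  -- the two kernels
  set Ψ : ℝ → ℝ := fun t => ∑' k : ℕ, a k * Real.cos (((n:ℝ) + k) * t + γ) with hΨdef
  set Ψ' : ℝ → ℝ := fun t => ∑' k : ℕ, a k * Real.cos (((n:ℝ) + k) * t + (-γ)) with hΨ'def
  have hcontaux : ∀ c : ℝ, Continuous (fun t => ∑' k : ℕ, a k * Real.cos (((n:ℝ) + k) * t + c)) := by
    intro c
    apply continuous_tsum (u := a) (fun k => by continuity) hsum
    intro k x
    rw [Real.norm_eq_abs, abs_mul, abs_of_nonneg (ha0 k)]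
    calc a k * |Real.cos (((n:ℝ) + k) * x + c)| ≤ a k * 1 :=
        mul_le_mul_of_nonneg_left (Real.abs_cos_le_one _) (ha0 k)
      _ = a k := mul_one _
  have hint : ∀ p q : ℝ, IntervalIntegrable (fun t => |Ψ t|) volume p q :=
    fun p q => ((hcontaux γ).abs).intervalIntegrable p q
  -- reflection identity
  have hrefl : ∀ t : ℝ, Ψ (2*π - t) = Ψ' t := by
    intro t
    apply tsum_congr
    intro k
    congr 1
    have harg : ((n:ℝ) + k) * (2*π - t) + γ = ((n+k : ℕ):ℝ) * (2*π) - (((n:ℝ) + k) * t + (-γ)) := by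
      push_cast
      ring
    rw [harg]
    rw [Real.cos_sub, Real.cos_nat_mul_two_pi]
    have hsin0 : Real.sin (((n+k : ℕ):ℝ) * (2*π)) = 0 := by
      rw [show ((n+k : ℕ):ℝ) * (2*π) = ((2*(n+k) : ℕ):ℝ) * π by push_cast; ring]
      exact Real.sin_nat_mul_pi _
    rw [hsin0]
    ring
  -- split the integral
  have hsplit : (∫ t in (0:ℝ)..(2*π), |Ψ t|)
      = (∫ t in (0:ℝ)..π, |Ψ t|) + ∫ t in π..(2*π), |Ψ t| :=
    (intervalIntegral.integral_add_adjacent_intervals (hint 0 π) (hint π (2*π))).symm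
  -- second piece
  have hsecond : (∫ t in π..(2*π), |Ψ t|) = ∫ t in (0:ℝ)..π, |Ψ' t| := by
    have h1 : (∫ t in (0:ℝ)..π, |Ψ (2*π - t)|) = ∫ t in (2*π - π)..(2*π - 0), |Ψ t| :=
      intervalIntegral.integral_comp_sub_left (fun t => |Ψ t|) (2*π)
    have h2 : (∫ t in (0:ℝ)..π, |Ψ (2*π - t)|) = ∫ t in (0:ℝ)..π, |Ψ' t| := by
      apply intervalIntegral.integral_congr
      intro t _
      show |Ψ (2*π - t)| = |Ψ' t|
      rw [hrefl t]
    rw [← h2, h1]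
    norm_num
    rw [show (2:ℝ)*π - π = π by ring]
  have hb1 : (∫ t in (0:ℝ)..π, |Ψ t|) ≤ 3 * π * S := main_half a ha0 haa hsum n γ
  have hb2 : (∫ t in (0:ℝ)..π, |Ψ' t|) ≤ 3 * π * S := main_half a ha0 haa hsum n (-γ)
  have hψx : 0 < ψ (3*(n:ℝ)) := hpos _ hx1
  have hS0 : 0 ≤ S := tsum_nonneg (fun k => div_nonneg (ha0 k) (by positivity))
  have hL0 : (0:ℝ) ≤ 1 + max 0 (Real.log (η n - n)) := by
    have := le_max_left (0:ℝ) (Real.log (η n - n))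
    linarith
  calc (∫ t in (0:ℝ)..(2*π), |Ψ t|)
      = (∫ t in (0:ℝ)..π, |Ψ t|) + ∫ t in (0:ℝ)..π, |Ψ' t| := by rw [hsplit, hsecond]
    _ ≤ 3 * π * S + 3 * π * S := add_le_add hb1 hb2
    _ = 6 * π * S := by ring
    _ ≤ 6 * 4 * S := by
        have hπ4 : π ≤ 4 := by linarith [Real.pi_le_four]
        nlinarith [hS0, Real.pi_pos]
    _ ≤ 24 * (28 * ψ (3*(n:ℝ)) * (1 + max 0 (Real.log (η n - n)))) := by
        nlinarith [hScont]
    _ ≤ 1000 * ψ (3 * (n:ℝ)) * (1 + max 0 (Real.log (η n - n))) := by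
        nlinarith [hψx, hL0]
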